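/- Let 1/3 < K < 1 and μ = (3K−1)/(1−K), and suppose z, w : (0,1] × ℝ → ℝ are C¹ and satisfy the T²-symmetric Euler system ∂_t z − (w/(t^{2μ}+w²)^{1/2}) ∂_x z − (t^{2μ}/(t^{2μ}+w²)^{3/2}) ∂_x w = 0 and ∂_t w − (K t^{2μ}(t^{2μ}+w²)^{1/2}/(t^{2μ}−(K−1)w²)) ∂_x z + (((2K−1)t^{2μ}+(K−1)w²) w/((t^{2μ}+w²)^{1/2}(t^{2μ}−(K−1)w²))) ∂_x w = t^{2μ−1}(−3K+μ+1) w/(t^{2μ}−(K−1)w²). Define v₁ = t^{−μ} w, v₀ = (1 + v₁²)^{1/2}, v⁰ = −v₀, v¹ = v₁, and ζ = z − ln v₀. Then on (0,1] × ℝ the pair (ζ, v₁) satisfies the two equations K ∂_t ζ − (K v₁/(v⁰ v₀)) ∂_t v₁ + (1/v⁰)( K v¹ ∂_x ζ + K ∂_x v₁ ) = 0 and −(K v₁/(v⁰ v₀)) ∂_t ζ + (1/v₀²) ∂_t v₁ + (1/v⁰)( K ∂_x ζ + (v¹/v₀²) ∂_x v₁ ) = −(1/(t v⁰)) · ((1−3K)/v₀)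 · v₁. -/

import Mathlib

set_option maxHeartbeats 1000000

/-- A C¹ solution `(z, w)` of the T²-symmetric Euler system yields, via
`v₁ = t^{−μ} w`, `v₀ = (1 + v₁²)^{1/2}`, `v⁰ = −v₀`, `v¹ = v₁`, `ζ = z − ln v₀`,
a solution of the two nontrivial components of the symmetric hyperbolic
formulation of the relativistic Euler equations. -/
theorem stmt19 (K μ : ℝ) (hK : 1/3 < K) (hK' : K < 1)
    (hμ : μ = (3*K - 1)/(1 - K))
    (z w : ℝ → ℝ → ℝ)
    (hC1z : ContDiffOn ℝ 1 (Function.uncurry z)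
      (Set.Ioc (0:ℝ) 1 ×ˢ (Set.univ : Set ℝ)))
    (hC1w : ContDiffOn ℝ 1 (Function.uncurry w)
      (Set.Ioc (0:ℝ) 1 ×ˢ (Set.univ : Set ℝ)))
    (zt zx wt wx : ℝ → ℝ → ℝ)
    (hzt : ∀ t ∈ Set.Ioc (0:ℝ) 1, ∀ x : ℝ, HasDerivAt (fun s => z s x) (zt t x) t)
    (hzx : ∀ t ∈ Set.Ioc (0:ℝ) 1, ∀ x : ℝ, HasDerivAt (fun y => z t y) (zx t x) x)
    (hwt : ∀ t ∈ Set.Ioc (0:ℝ) 1, ∀ x : ℝ, HasDerivAt (fun s => w s x) (wt t x) t)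
    (hwx : ∀ t ∈ Set.Ioc (0:ℝ) 1, ∀ x : ℝ, HasDerivAt (fun y => w t y) (wx t x) x)
    (heq1 : ∀ t ∈ Set.Ioc (0:ℝ) 1, ∀ x : ℝ,
      zt t x - (w t x / (t ^ (2*μ) + (w t x)^2) ^ ((1:ℝ)/2)) * zx t x
        - (t ^ (2*μ) / (t ^ (2*μ) + (w t x)^2) ^ ((3:ℝ)/2)) * wx t x = 0)
    (heq2 : ∀ t ∈ Set.Ioc (0:ℝ) 1, ∀ x : ℝ,
      wt t x - (K * t ^ (2*μ) * (t ^ (2*μ) + (w t x)^2) ^ ((1:ℝ)/2) /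
          (t ^ (2*μ) - (K - 1) * (w t x)^2)) * zx t x
        + (((2*K - 1) * t ^ (2*μ) + (K - 1) * (w t x)^2) * w t x /
          ((t ^ (2*μ) + (w t x)^2) ^ ((1:ℝ)/2) * (t ^ (2*μ) - (K - 1) * (w t x)^2)))
          * wx t x
        = t ^ (2*μ - 1) * (-3*K + μ + 1) * w t x /
            (t ^ (2*μ) - (K - 1) * (w t x)^2)) :
    ∀ t ∈ Set.Ioc (0:ℝ) 1, ∀ x : ℝ, ∀ v₁ v₀ vup0 vup1 : ℝ,
      v₁ = t ^ (-μ) * w t x →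
      v₀ = (1 + v₁^2) ^ ((1:ℝ)/2) →
      vup0 = -v₀ →
      vup1 = v₁ →
      ∀ Dtζ Dxζ Dtv Dxv : ℝ,
      HasDerivAt (fun s => z s x - Real.log ((1 + (s ^ (-μ) * w s x)^2) ^ ((1:ℝ)/2)))
        Dtζ t →
      HasDerivAt (fun y => z t y - Real.log ((1 + (t ^ (-μ) * w t y)^2) ^ ((1:ℝ)/2)))
        Dxζ x →
      HasDerivAt (fun s => s ^ (-μ) * w s x) Dtv t →
      HasDerivAt (fun y => t ^ (-μ) * w t y) Dxv x →
      (K * Dtζ - (K * v₁ / (vup0 * v₀)) * Dtv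
          + (1 / vup0) * (K * vup1 * Dxζ + K * Dxv) = 0) ∧
      (-(K * v₁ / (vup0 * v₀)) * Dtζ + (1 / v₀^2) * Dtv
          + (1 / vup0) * (K * Dxζ + (vup1 / v₀^2) * Dxv)
        = -(1 / (t * vup0)) * ((1 - 3*K) / v₀) * v₁) := by
  intro t ht x v₁ v₀ vup0 vup1 hv₁ hv₀ hvup0 hvup1 Dtζ Dxζ Dtv Dxv hDtζ hDxζ hDtv hDxv
  have ht0 : (0:ℝ) < t := ht.1
  set W : ℝ := w t x with hWdef
  set T : ℝ := t ^ μ with hTdef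
  have hT0 : (0:ℝ) < T := Real.rpow_pos_of_pos ht0 μ
  have htm : t ^ (-μ) = T⁻¹ := by rw [Real.rpow_neg ht0.le]
  have hT2 : t ^ (2*μ) = T^2 := by rw [two_mul, Real.rpow_add ht0]; ring
  have ht2m1 : t ^ (2*μ-1) = T^2 / t := by
    rw [Real.rpow_sub ht0, hT2, Real.rpow_one]
  have htm1 : t ^ (-μ-1) = T⁻¹ / t := by
    rw [show -μ-1 = -μ + (-1) by ring, Real.rpow_add ht0, htm, Real.rpow_neg_one]
    ring
  set u : ℝ := t ^ (-μ) * W with hudef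
  have hW : W = u * T := by
    rw [hudef, htm]; field_simp
  set P : ℝ := (1 + u^2) ^ ((1:ℝ)/2) with hPdef
  have h1u : (0:ℝ) < 1 + u^2 := by positivity
  have hP0 : (0:ℝ) < P := Real.rpow_pos_of_pos h1u _
  have hP2 : P^2 = 1 + u^2 := by
    rw [hPdef, ← Real.rpow_natCast ((1+u^2) ^ ((1:ℝ)/2)) 2, ← Real.rpow_mul h1u.le]
    norm_num
  clear_value W T u P
  have hQPT : t ^ (2*μ) + W^2 = (P*T)^2 := by
    rw [hT2]; linear_combination (-(T^2))*hP2 + (W + u*T)*hW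
  have hPT0 : (0:ℝ) < P * T := by positivity
  have hS12 : (t ^ (2*μ) + W^2) ^ ((1:ℝ)/2) = P * T := by
    rw [hQPT, ← Real.rpow_natCast (P*T) 2, ← Real.rpow_mul hPT0.le]
    norm_num
  have hS32 : (t ^ (2*μ) + W^2) ^ ((3:ℝ)/2) = (P*T)^3 := by
    rw [hQPT, ← Real.rpow_natCast (P*T) 2, ← Real.rpow_mul hPT0.le,
      show ((2:ℕ):ℝ)*(3/2) = ((3:ℕ):ℝ) by norm_num, Real.rpow_natCast]
  have hd0 : (0:ℝ) < 1 + (1-K)*u^2 := by nlinarith [sq_nonneg u]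
  have hD : t ^ (2*μ) - (K-1)*W^2 = T^2 * (1 + (1-K)*u^2) := by
    rw [hT2, hW]; ring
  -- the two PDE hypotheses at (t,x)
  have H1 := heq1 t ht x
  have H2 := heq2 t ht x
  rw [← hWdef, hS12, hS32, hT2] at H1
  rw [← hWdef, hD, hS12, hT2, ht2m1] at H2
  -- derivative identifications
  have hwt' := hwt t ht x
  have hwx' := hwx t ht x
  have hzt' := hzt t ht x
  have hzx' := hzx t ht x
  have hDxv' : HasDerivAt (fun y => t ^ (-μ) * w t y) (t ^ (-μ) * wx t x) x :=
    hwx'.const_mul _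
  have eDxv : Dxv = T⁻¹ * wx t x := by
    rw [hDxv.unique hDxv', htm]
  have hpow : HasDerivAt (fun s : ℝ => s ^ (-μ)) (-μ * t ^ (-μ - 1)) t :=
    Real.hasDerivAt_rpow_const (Or.inl ht0.ne')
  have hDtv' : HasDerivAt (fun s => s ^ (-μ) * w s x)
      (-μ * t ^ (-μ-1) * w t x + t ^ (-μ) * wt t x) t := hpow.mul hwt'
  have eDtv : Dtv = -μ * u / t + T⁻¹ * wt t x := by
    rw [hDtv.unique hDtv', ← hWdef, htm1, htm, hudef, htm]
    ring
  -- Dtζ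
  have hu' : (1:ℝ) + (t ^ (-μ) * w t x)^2 = 1 + u^2 := by rw [← hWdef, ← hudef]
  have hinner_t : HasDerivAt (fun s => 1 + (s ^ (-μ) * w s x)^2) (2 * u * Dtv) t := by
    have h := (hDtv.pow 2).const_add 1
    refine h.congr_deriv ?_
    rw [← hWdef, ← hudef]
    ring
  have hPt : HasDerivAt (fun s => (1 + (s ^ (-μ) * w s x)^2) ^ ((1:ℝ)/2))
      ((2 * u * Dtv) * ((1:ℝ)/2) * (1 + (t ^ (-μ) * w t x)^2) ^ ((1:ℝ)/2 - 1)) t :=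
    hinner_t.rpow_const (Or.inl (by rw [hu']; exact h1u.ne'))
  have hA : (1 + (t ^ (-μ) * w t x)^2) ^ ((1:ℝ)/2 - 1) = P⁻¹ := by
    rw [hu', show (1:ℝ)/2 - 1 = -(1/2) by norm_num, Real.rpow_neg h1u.le, hPdef]
  have hlog_t : HasDerivAt
      (fun s => Real.log ((1 + (s ^ (-μ) * w s x)^2) ^ ((1:ℝ)/2)))
      (((2 * u * Dtv) * ((1:ℝ)/2) * (1 + (t ^ (-μ) * w t x)^2) ^ ((1:ℝ)/2 - 1))
        / ((1 + (t ^ (-μ) * w t x)^2) ^ ((1:ℝ)/2))) t :=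
    hPt.log (by rw [hu', ← hPdef]; exact hP0.ne')
  have eDtζ : Dtζ = zt t x - u * Dtv / P^2 := by
    rw [hDtζ.unique (hzt'.sub hlog_t), hA, hu', ← hPdef]
    field_simp
  -- Dxζ
  have hinner_x : HasDerivAt (fun y => 1 + (t ^ (-μ) * w t y)^2) (2 * u * Dxv) x := by
    have h := (hDxv.pow 2).const_add 1
    refine h.congr_deriv ?_
    rw [← hWdef, ← hudef]
    ring
  have hPx : HasDerivAt (fun y => (1 + (t ^ (-μ) * w t y)^2) ^ ((1:ℝ)/2))
      ((2 * u * Dxv) * ((1:ℝ)/2) * (1 + (t ^ (-μ) * w t x)^2) ^ ((1:ℝ)/2 - 1)) x :=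
    hinner_x.rpow_const (Or.inl (by rw [hu']; exact h1u.ne'))
  have hlog_x : HasDerivAt
      (fun y => Real.log ((1 + (t ^ (-μ) * w t y)^2) ^ ((1:ℝ)/2)))
      (((2 * u * Dxv) * ((1:ℝ)/2) * (1 + (t ^ (-μ) * w t x)^2) ^ ((1:ℝ)/2 - 1))
        / ((1 + (t ^ (-μ) * w t x)^2) ^ ((1:ℝ)/2))) x :=
    hPx.log (by rw [hu', ← hPdef]; exact hP0.ne')
  have eDxζ : Dxζ = zx t x - u * Dxv / P^2 := by
    rw [hDxζ.unique (hzx'.sub hlog_x), hA, hu', ← hPdef]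
    field_simp
  -- identify v's
  have hv₀' : v₀ = P := by rw [hv₀, hv₁, ← hPdef]
  have hK1 : (1:ℝ) - K ≠ 0 := by linarith
  have hμ' : μ * (1 - K) = 3*K - 1 := by
    rw [hμ]; exact div_mul_cancel₀ _ hK1
  -- final algebra
  subst hvup0 hvup1
  rw [hW] at H1 H2
  have hT0' : T ≠ 0 := hT0.ne'
  have hP0' : P ≠ 0 := hP0.ne'
  have ht0' : t ≠ 0 := ht0.ne'
  have hd0' : (1:ℝ) + (1-K)*u^2 ≠ 0 := hd0.ne'
  have E1 : zt t x * (P^3*T) = u*P^2*T*zx t x + wx t x := by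
    have h : zt t x = u*T/(P*T)*zx t x + T^2/(P*T)^3*wx t x := by
      linear_combination H1
    rw [h]; field_simp
  have E2 : wt t x * (t*P*(1+(1-K)*u^2)) = K*T*P^2*t*zx t x
      - ((2*K-1)+(K-1)*u^2)*(u*t)*wx t x + (-3*K+μ+1)*(u*T)*P := by
    have h : wt t x = K*T^2*(P*T)/(T^2*(1+(1-K)*u^2))*zx t x
        - ((2*K-1)*T^2+(K-1)*(u*T)^2)*(u*T)/(P*T*(T^2*(1+(1-K)*u^2)))*wx t x
        + T^2/t*(-3*K+μ+1)*(u*T)/(T^2*(1+(1-K)*u^2)) := by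
      linear_combination H2
    rw [h]; field_simp
  constructor
  · rw [hv₁, hv₀', eDtζ, eDxζ, eDtv, eDxv]
    field_simp
    linear_combination K*t*E1 - K*t*(wx t x)*hP2
  · rw [hv₁, hv₀', eDtζ, eDxζ, eDtv, eDxv]
    field_simp
    apply mul_left_cancel₀ hP0'
    linear_combination K*u*t*E1 + E2 + (t*P*(wt t x) - K*P^2*t*T*(zx t x) + (K-1)*u*t*(wx t x) - P*u*μ*T - u*P*T*(1-3*K))*hP2 - u^3*T*P*hμ'
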